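/- Let (G,X) be a minimal topological dynamical system, let d ≥ 1, and let φ:(G,X)→(G,Y) be a dynamical morphism onto a t.d.s. (G,Y) for which NRP^[d](Y) equals the diagonal of Y × Y. Then φ(x) = φ(y) for every (x,y) ∈ NRP^[d](X); consequently φ factors through the quotient of X by NRP^[d](X). -/

import Mathlib

/-- Generators of the Host–Kra cube group: `[h]_F` for `F` a hyperface `{ω : ω i = a}`. -/
def hyperfaceGens (G : Type*) [Group G] (d : ℕ) : Set ((Fin d → Bool) → G) :=
  {g | ∃ (h : G) (i : Fin d) (a : Bool), g = fun ω => if ω i = a then h else 1}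

/-- Generators of the face cube group: `[h]_F` for `F` an upper hyperface `{ω : ω i = 1}`. -/
def upperFaceGens (G : Type*) [Group G] (d : ℕ) : Set ((Fin d → Bool) → G) :=
  {g | ∃ (h : G) (i : Fin d), g = fun ω => if ω i = true then h else 1}

/-- The Host–Kra cube group `HK^[d]`. -/
def HK (G : Type*) [Group G] (d : ℕ) : Subgroup ((Fin d → Bool) → G) :=
  Subgroup.closure (hyperfaceGens G d)

/-- The face cube group `F^[d]`. -/
def FG (G : Type*) [Group G] (d : ℕ) : Subgroup ((Fin d → Bool) → G) :=
  Subgroup.closure (upperFaceGens G d)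

/-- Coordinatewise action of `G^[d]` on `X^[d]`. -/
def cubeAct {G X : Type*} [Group G] [MulAction G X] {d : ℕ}
    (g : (Fin d → Bool) → G) (c : (Fin d → Bool) → X) : (Fin d → Bool) → X :=
  fun ω => g ω • c ω

/-- The dynamical cubespace `C_G^[d](X)`: the closure of the set of `HK^[d]`-translates
of constant configurations. -/
def cubeSpace (G X : Type*) [Group G] [MulAction G X] [TopologicalSpace X] (d : ℕ) :
    Set ((Fin d → Bool) → X) :=
  closure {c | ∃ g ∈ HK G d, ∃ x : X, c = cubeAct g (fun _ => x)}

/-- The lower corner `⌞^[d](x,y)`: value `y` at `1⃗`, value `x` elsewhere. -/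
def lowerCorner {X : Type*} (d : ℕ) (x y : X) : (Fin d → Bool) → X :=
  fun ω => if ω = (fun _ => true) then y else x

/-- The upper corner `⌝^[d](x,y)`: value `x` at `0⃗`, value `y` elsewhere. -/
def upperCorner {X : Type*} (d : ℕ) (x y : X) : (Fin d → Bool) → X :=
  fun ω => if ω = (fun _ => false) then x else y

/-- The nilpotent regionally proximal relation of order `d`. -/
def NRP (G X : Type*) [Group G] [MulAction G X] [TopologicalSpace X] (d : ℕ) :
    Set (X × X) :=
  {p | lowerCorner (d + 1) p.1 p.2 ∈ cubeSpace G X (d + 1)}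

/-- `Y_x^[d](X)`: the closure of the `F^[d]`-orbit of the constant configuration `x^[d]`. -/
def Yx (G : Type*) {X : Type*} [Group G] [MulAction G X] [TopologicalSpace X]
    (d : ℕ) (x : X) : Set ((Fin d → Bool) → X) :=
  closure {c | ∃ f ∈ FG G d, c = cubeAct f (fun _ => x)}

/-- `C_x^[d](X)`: cubes whose value at `0⃗` is `x`. -/
def Cx (G : Type*) {X : Type*} [Group G] [MulAction G X] [TopologicalSpace X]
    (d : ℕ) (x : X) : Set ((Fin d → Bool) → X) :=
  {c ∈ cubeSpace G X d | c (fun _ => false) = x}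


/-- If `(G,Y)` is a factor with trivial `NRP^[d]`, then the factor map collapses
`NRP^[d](X)`; consequently it factors through `X/NRP^[d](X)`. -/
theorem factor_through_NRP_quotient
    {G X : Type*} [Group G] [TopologicalSpace G] [IsTopologicalGroup G]
    [TopologicalSpace X] [CompactSpace X] [T2Space X]
    [MulAction G X] [ContinuousSMul G X]
    {Y : Type*} [TopologicalSpace Y] [CompactSpace Y] [T2Space Y]
    [MulAction G Y] [ContinuousSMul G Y]
    {d : ℕ} (hd : 1 ≤ d)
    (hmin : ∀ x : X, Dense (MulAction.orbit G x))
    (φ : X → Y) (hcont : Continuous φ) (hsurj : Function.Surjective φ)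
    (hequiv : ∀ (g : G) (x : X), φ (g • x) = g • φ x)
    (hY : NRP G Y d = {p : Y × Y | p.1 = p.2}) :
    ∀ x y : X, (x, y) ∈ NRP G X d → φ x = φ y := by
  intro x y hxy
  have hYd : ((φ x, φ y) : Y × Y) ∈ NRP G Y d := by
    have hΦ : Continuous (fun c : (Fin (d+1) → Bool) → X => φ ∘ c) := by
      exact continuous_pi fun ω => hcont.comp (continuous_apply ω)
    have himg : (fun c : (Fin (d+1) → Bool) → X => φ ∘ c) ''
        {c | ∃ g ∈ HK G (d+1), ∃ x : X, c = cubeAct g (fun _ => x)} ⊆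
        {c | ∃ g ∈ HK G (d+1), ∃ y : Y, c = cubeAct g (fun _ => y)} := by
      rintro c ⟨c₀, ⟨g, hg, z, rfl⟩, rfl⟩
      refine ⟨g, hg, φ z, ?_⟩
      funext ω
      simp [cubeAct, Function.comp, hequiv]
    have h1 : φ ∘ lowerCorner (d+1) x y ∈ cubeSpace G Y (d+1) := by
      have hsub : (fun c : (Fin (d+1) → Bool) → X => φ ∘ c) '' cubeSpace G X (d+1) ⊆
          cubeSpace G Y (d+1) := by
        unfold cubeSpace
        refine (image_closure_subset_closure_image hΦ).trans ?_
        exact closure_mono himg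
      exact hsub ⟨_, hxy, rfl⟩
    have heq : φ ∘ lowerCorner (d+1) x y = lowerCorner (d+1) (φ x) (φ y) := by
      funext ω
      by_cases h : ω = fun _ => true <;> simp [lowerCorner, h, Function.comp]
    rw [heq] at h1
    exact h1
  rw [hY] at hYd
  exact hYd
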